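/- Let ε > 0 and let μ, ν ∈ M^∞. For any measurable set U ⊆ W_ε, if OT_∞(μ, ν) < ε/2 then μ(Ū) ≤ ν(U^{ε/2}) and ν(Ū) ≤ μ(U^{ε/2}), where Ū denotes the closure of U and U^{ε/2} = { x ∈ W : ‖x − U‖_q < ε/2 } is the (ε/2)-thickening of U. -/

import Mathlib

/-! Common setup: the birth-death plane, Radon measures, partial optimal transport. -/

noncomputable section

open MeasureTheory Topology Filter Set
open scoped ENNReal

/-- The ambient plane `ℝ²` (with the sup-norm, i.e. `q = ∞`). -/
abbrev P2 : Type := ℝ × ℝ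

/-- The birth-death plane `W = {(b,d) : b < d}`. -/
def Wbd : Set P2 := {p | p.1 < p.2}

/-- The closure `W̄` of the birth-death plane. -/
def Wcl : Set P2 := closure Wbd

/-- The diagonal `Δ`. -/
def Diag : Set P2 := {p | p.1 = p.2}

/-- Distance from a point to the diagonal, `‖x - Δ‖`. -/
def distDiag (x : P2) : ℝ := Metric.infDist x Diag

/-- The pseudometric `d(x,y) = min(‖x-y‖, ‖x-Δ‖ + ‖y-Δ‖)` on `W̄`. -/
def dW (x y : P2) : ℝ := min (dist x y) (distDiag x + distDiag y)

/-- The support of a Borel measure: points all of whose neighborhoods have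
positive measure. -/
def msupport {α : Type*} [TopologicalSpace α] [MeasurableSpace α] (μ : Measure α) : Set α :=
  {x | ∀ U ∈ 𝓝 x, 0 < μ U}

/-- `μ` is a Radon measure on the subspace `S`: it vanishes off `S`, is inner regular
(on relatively open sets) by compact sets, outer regular (by relatively open sets), and finite
on compact subsets of `S`. -/
def RadonOn {α : Type*} [TopologicalSpace α] [MeasurableSpace α] (S : Set α)
    (μ : Measure α) : Prop :=
  μ Sᶜ = 0 ∧
  (∀ U : Set α, IsOpen U → μ (U ∩ S) = ⨆ (K : Set α) (_ : K ⊆ U ∩ S) (_ : IsCompact K), μ K) ∧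
  (∀ E : Set α, E ⊆ S → MeasurableSet E →
    μ E = ⨅ (U : Set α) (_ : IsOpen U) (_ : E ⊆ U), μ (U ∩ S)) ∧
  (∀ K : Set α, K ⊆ S → IsCompact K → μ K < ⊤)

/-- The set `M` of Radon measures on `W`. -/
def MRadon : Set (Measure P2) := {μ | RadonOn Wbd μ}

/-- `pers_∞(μ) = sup{‖x-Δ‖ : x ∈ spt μ}` (valued in `ℝ≥0∞`). -/
def persInf (μ : Measure P2) : ℝ≥0∞ := ⨆ x ∈ msupport μ, ENNReal.ofReal (distDiag x)

/-- The space `M^∞` of Radon measures on `W` with finite `∞`-persistence. -/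
def MInf : Set (Measure P2) := {μ | RadonOn Wbd μ ∧ persInf μ < ⊤}

/-- A coupling (admissible transport plan) between `μ` and `ν`: a Radon measure on
`W̄ × W̄` whose marginals restricted to Borel subsets of `W` are `μ` and `ν`. -/
def IsCoupling (π : Measure (P2 × P2)) (μ ν : Measure P2) : Prop :=
  RadonOn (Wcl ×ˢ Wcl) π ∧
  (∀ A : Set P2, A ⊆ Wbd → MeasurableSet A → π (A ×ˢ Wcl) = μ A) ∧
  (∀ B : Set P2, B ⊆ Wbd → MeasurableSet B → π (Wcl ×ˢ B) = ν B)

/-- The `∞`-cost of a transport plan: `sup {d(x,y) : (x,y) ∈ spt π}`. -/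
def costInf (π : Measure (P2 × P2)) : ℝ≥0∞ :=
  ⨆ p ∈ msupport π, ENNReal.ofReal (dW p.1 p.2)

/-- The partial `∞`-optimal transport distance. -/
def OT (μ ν : Measure P2) : ℝ≥0∞ :=
  ⨅ (π : Measure (P2 × P2)) (_ : IsCoupling π μ ν), costInf π

/-- `W_ε = {(x,y) : y - x > ε}`. -/
def Weps (ε : ℝ) : Set P2 := {p | p.2 - p.1 > ε}

/-- The space `M_f^∞` of off-diagonally finite measures. -/
def Mf : Set (Measure P2) := {μ | μ ∈ MInf ∧ ∀ ε : ℝ, 0 < ε → μ (Weps ε) < ⊤}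

/-- The space `M_fin^∞` of finite measures in `M^∞`. -/
def Mfin : Set (Measure P2) := {μ | μ ∈ MInf ∧ μ Wbd < ⊤}

/-- `f ∈ C_c(W)`: a continuous function, compactly supported, with support contained
in the open set `W` (extended by zero to the plane). -/
def IsCcW (f : P2 → ℝ) : Prop :=
  Continuous f ∧ HasCompactSupport f ∧ tsupport f ⊆ Wbd

/-- Convergence of a sequence of measures to `μ` in the distance `OT_∞`. -/
def OTConv (u : ℕ → Measure P2) (μ : Measure P2) : Prop :=
  Tendsto (fun n => OT (u n) μ) atTop (𝓝 0)


/-- Auxiliary: any Radon-on-`S` measure vanishes off its support. -/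
lemma msupport_compl_null {α : Type*} [TopologicalSpace α] [MeasurableSpace α]
    {S : Set α} {π : Measure α} (h : RadonOn S π) : π (msupport π)ᶜ = 0 := by
  obtain ⟨hS, hinner, -, -⟩ := h
  have hopen : IsOpen (msupport π)ᶜ := by
    rw [isOpen_iff_mem_nhds]
    intro x hx
    simp only [msupport, Set.mem_compl_iff, Set.mem_setOf_eq, not_forall] at hx
    obtain ⟨V, hV, hV0⟩ := hx
    refine Filter.mem_of_superset (interior_mem_nhds.2 hV) ?_
    intro y hy hy'
    exact hV0 (hy' V (mem_interior_iff_mem_nhds.1 hy))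
  have h1 : π ((msupport π)ᶜ ∩ S) = 0 := by
    rw [hinner _ hopen]
    simp only [ENNReal.iSup_eq_zero]
    intro K hK hKc
    have hKsub : K ⊆ (msupport π)ᶜ := hK.trans Set.inter_subset_left
    have hV : ∀ x ∈ K, ∃ V ∈ 𝓝 x, π V = 0 := by
      intro x hx
      have := hKsub hx
      simp only [msupport, Set.mem_compl_iff, Set.mem_setOf_eq, not_forall] at this
      obtain ⟨V, hV, hV0⟩ := this
      exact ⟨V, hV, (not_lt.1 hV0).antisymm zero_le⟩
    choose! V hVnhds hV0 using hV
    obtain ⟨t, hcover⟩ := hKc.elim_nhds_subcover' (fun x hx => V x) (fun x hx => hVnhds x hx)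
    have hle : π (⋃ x ∈ t, V (x : α)) ≤ ∑ x ∈ t, π (V (x : α)) :=
      measure_biUnion_finset_le t _
    have hsum : ∑ x ∈ t, π (V (x : α)) = 0 :=
      Finset.sum_eq_zero fun x _ => hV0 _ x.2
    exact le_antisymm ((measure_mono hcover).trans (hle.trans_eq hsum)) zero_le
  refine le_antisymm ?_ zero_le
  calc π (msupport π)ᶜ ≤ π (((msupport π)ᶜ ∩ S) ∪ Sᶜ) := by
        apply measure_mono; intro x hx
        by_cases hxS : x ∈ S
        · exact Or.inl ⟨hx, hxS⟩
        · exact Or.inr hxS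
    _ ≤ π ((msupport π)ᶜ ∩ S) + π Sᶜ := measure_union_le _ _
    _ = 0 := by rw [h1, hS, add_zero]

lemma distDiag_ge {x : P2} {c : ℝ} (h : c ≤ x.2 - x.1) : c / 2 ≤ distDiag x := by
  have hne : Diag.Nonempty := ⟨(0, 0), rfl⟩
  by_contra hcon
  push_neg at hcon
  obtain ⟨y, hy, hlt⟩ := (Metric.infDist_lt_iff hne).1 hcon
  have hyd : y.1 = y.2 := hy
  rw [Prod.dist_eq, max_lt_iff] at hlt
  obtain ⟨h1, h2⟩ := hlt
  rw [Real.dist_eq] at h1 h2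
  have a1 := abs_lt.1 h1
  have a2 := abs_lt.1 h2
  rw [hyd] at a1
  linarith [a1.1, a1.2, a2.1, a2.2]

lemma isOpen_Wbd : IsOpen Wbd := isOpen_lt continuous_fst continuous_snd

lemma closure_subset_of_Weps {ε : ℝ} {U : Set P2} (hUW : U ⊆ Weps ε) :
    closure U ⊆ {p : P2 | ε ≤ p.2 - p.1} := by
  refine closure_minimal (fun p hp => show ε ≤ p.2 - p.1 from le_of_lt (hUW hp)) ?_
  exact isClosed_le continuous_const (continuous_snd.sub continuous_fst)

/-- The key geometric step: if `a` lies in the closure of `U ⊆ W_ε` and `dW a b < ε/2`,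
then `b` lies in the `ε/2`-thickening of `U` intersected with `W`. -/
lemma mem_thickening_of_dW {ε : ℝ} (hε : 0 < ε) {U : Set P2} (hUW : U ⊆ Weps ε)
    {a b : P2} (ha : a ∈ closure U) (hd : dW a b < ε / 2) :
    b ∈ Metric.thickening (ε / 2) U ∩ Wbd := by
  have ha' : ε ≤ a.2 - a.1 := closure_subset_of_Weps hUW ha
  have hda : ε / 2 ≤ distDiag a := distDiag_ge ha'
  have hdb : 0 ≤ distDiag b := Metric.infDist_nonneg
  have hdist : dist a b < ε / 2 := by
    by_contra h'
    push_neg at h'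
    exact absurd hd (not_lt.2 (le_min h' (by linarith)))
  have h1 : dist a.1 b.1 < ε / 2 := lt_of_le_of_lt (by rw [Prod.dist_eq]; exact le_max_left _ _) hdist
  have h2 : dist a.2 b.2 < ε / 2 := lt_of_le_of_lt (by rw [Prod.dist_eq]; exact le_max_right _ _) hdist
  constructor
  · rw [← Metric.thickening_closure]
    exact Metric.mem_thickening_iff.mpr ⟨a, ha, by rwa [dist_comm]⟩
  · rw [Real.dist_eq] at h1 h2
    have b1 := abs_lt.1 h1
    have b2 := abs_lt.1 h2
    show b.1 < b.2
    linarith [b1.1, b1.2, b2.1, b2.2]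

/-- The interleaving-type lemma: if `OT_∞(μ,ν) < ε/2` and `U ⊆ W_ε` is
measurable, then `μ(Ū) ≤ ν(U^{ε/2})` and `ν(Ū) ≤ μ(U^{ε/2})`, where `U^{ε/2}` is the
`ε/2`-thickening of `U` inside `W`. -/
theorem measure_interleaving
    (ε : ℝ) (hε : 0 < ε)
    (μ ν : Measure P2) (hμ : μ ∈ MInf) (hν : ν ∈ MInf)
    (U : Set P2) (hUW : U ⊆ Weps ε) (hUm : MeasurableSet U)
    (hOT : OT μ ν < ENNReal.ofReal (ε / 2)) :
    μ (closure U) ≤ ν (Metric.thickening (ε / 2) U ∩ Wbd) ∧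
      ν (closure U) ≤ μ (Metric.thickening (ε / 2) U ∩ Wbd) := by
  obtain ⟨π, hπ⟩ := iInf_lt_iff.mp hOT
  obtain ⟨hc, hcost⟩ := iInf_lt_iff.mp hπ
  have hε2 : (0 : ℝ) < ε / 2 := by linarith
  -- every point of the support of π moves by less than ε/2
  have hsupp : ∀ p ∈ msupport π, dW p.1 p.2 < ε / 2 := by
    intro p hp
    have h1 : ENNReal.ofReal (dW p.1 p.2) ≤ costInf π := by
      exact le_iSup₂ (f := fun (p : P2 × P2) (_ : p ∈ msupport π) =>
        ENNReal.ofReal (dW p.1 p.2)) p hp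
    exact (ENNReal.ofReal_lt_ofReal_iff hε2).mp (lt_of_le_of_lt h1 hcost)
  have hnull : π (msupport π)ᶜ = 0 := msupport_compl_null hc.1
  have hclWbd : closure U ⊆ Wbd := fun p hp => by
    have := closure_subset_of_Weps hUW hp
    show p.1 < p.2
    simp only [Set.mem_setOf_eq] at this
    linarith
  have hclWcl : closure U ⊆ Wcl := hclWbd.trans subset_closure
  have hclm : MeasurableSet (closure U) := isClosed_closure.measurableSet
  set T : Set P2 := Metric.thickening (ε / 2) U ∩ Wbd with hT
  have hTo : IsOpen T := Metric.isOpen_thickening.inter isOpen_Wbd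
  have hTsub : T ⊆ Wbd := Set.inter_subset_right
  have hTm : MeasurableSet T := hTo.measurableSet
  have key : ∀ E F : Set P2 × Set P2,
      (E.1 ×ˢ E.2) ∩ msupport π ⊆ F.1 ×ˢ F.2 → π (E.1 ×ˢ E.2) ≤ π (F.1 ×ˢ F.2) := by
    intro E F hsub
    calc π (E.1 ×ˢ E.2) ≤ π (((E.1 ×ˢ E.2) ∩ msupport π) ∪ (msupport π)ᶜ) := by
          apply measure_mono; intro x hx
          by_cases hxM : x ∈ msupport π
          · exact Or.inl ⟨hx, hxM⟩
          · exact Or.inr hxM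
      _ ≤ π ((E.1 ×ˢ E.2) ∩ msupport π) + π (msupport π)ᶜ := measure_union_le _ _
      _ = π ((E.1 ×ˢ E.2) ∩ msupport π) := by rw [hnull, add_zero]
      _ ≤ π (F.1 ×ˢ F.2) := measure_mono hsub
  constructor
  · calc μ (closure U) = π (closure U ×ˢ Wcl) := (hc.2.1 _ hclWbd hclm).symm
      _ ≤ π (Wcl ×ˢ T) := by
          apply key (closure U, Wcl) (Wcl, T)
          rintro ⟨a, b⟩ ⟨⟨haU, hbW⟩, hM⟩
          exact ⟨hclWcl haU, mem_thickening_of_dW hε hUW haU (hsupp _ hM)⟩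
      _ = ν T := hc.2.2 _ hTsub hTm
  · calc ν (closure U) = π (Wcl ×ˢ closure U) := (hc.2.2 _ hclWbd hclm).symm
      _ ≤ π (T ×ˢ Wcl) := by
          apply key (Wcl, closure U) (T, Wcl)
          rintro ⟨a, b⟩ ⟨⟨haW, hbU⟩, hM⟩
          refine ⟨?_, hclWcl hbU⟩
          apply mem_thickening_of_dW hε hUW hbU
          have := hsupp _ hM
          simpa only [dW, dist_comm, add_comm] using this
      _ = μ T := hc.2.1 _ hTsub hTm
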